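/- The T1 transformation preserves event traces: if a non-colored node n with a unique successor m is removed and each edge (p,n) is replaced by (p,m), then the set of event traces of paths from the entry node to the exit node is unchanged. -/

import Mathlib

/-- `l` is a walk from `a` to `b` in the directed graph with edge relation `E`. -/
def IsWalkFromTo {V : Type*} (E : V → V → Prop) (a b : V) (l : List V) : Prop :=
  l ≠ [] ∧ l.head? = some a ∧ l.getLast? = some b ∧ l.Chain' E

section Aux

variable {V : Type*} [DecidableEq V]

open Classical in
/-- Expand a walk in the transformed graph into a walk in the original graph by
reinserting `n` on redirected edges. -/
noncomputable def expand (E : V → V → Prop) (n : V) : List V → List V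
  | [] => []
  | [x] => [x]
  | x :: y :: rest => (if E x y then [x] else [x, n]) ++ expand E n (y :: rest)

lemma expand_cons (E : V → V → Prop) (n : V) (x : V) (l : List V) :
    ∃ t, expand E n (x :: l) = x :: t := by
  cases l with
  | nil => exact ⟨[], rfl⟩
  | cons y rest =>
    by_cases h : E x y
    · exact ⟨expand E n (y :: rest), by simp [expand, h]⟩
    · exact ⟨n :: expand E n (y :: rest), by simp [expand, h]⟩

lemma expand_head? (E : V → V → Prop) (n : V) (l : List V) :
    (expand E n l).head? = l.head? := by
  cases l with
  | nil => rfl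
  | cons x t => obtain ⟨t', ht⟩ := expand_cons E n x t; simp [ht]

lemma expand_getLast? (E : V → V → Prop) (n : V) :
    ∀ l : List V, (expand E n l).getLast? = l.getLast? := by
  intro l
  induction l with
  | nil => rfl
  | cons x t ih =>
    cases t with
    | nil => rfl
    | cons y rest =>
      obtain ⟨t', ht⟩ := expand_cons E n y rest
      by_cases h : E x y
      · rw [show expand E n (x :: y :: rest) = x :: expand E n (y :: rest) by
          simp [expand, h]]
        rw [ht, List.getLast?_cons_cons, ← ht, ih, List.getLast?_cons_cons]
      · rw [show expand E n (x :: y :: rest) = x :: n :: expand E n (y :: rest) by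
          simp [expand, h]]
        rw [ht, List.getLast?_cons_cons, List.getLast?_cons_cons, ← ht, ih,
          List.getLast?_cons_cons]

lemma expand_filter (E : V → V → Prop) (n : V) (p : V → Bool) (hpn : p n = false) :
    ∀ l : List V, (expand E n l).filter p = l.filter p := by
  intro l
  induction l with
  | nil => rfl
  | cons x t ih =>
    cases t with
    | nil => rfl
    | cons y rest =>
      by_cases h : E x y
      · rw [show expand E n (x :: y :: rest) = x :: expand E n (y :: rest) by
          simp [expand, h]]
        simp only [List.filter_cons, ih]
      · rw [show expand E n (x :: y :: rest) = x :: n :: expand E n (y :: rest) by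
          simp [expand, h]]
        simp only [List.filter_cons, ih, hpn]
        cases p x <;> simp

lemma expand_chain' (E : V → V → Prop) (n m : V)
    (hsuc : ∀ v, E n v ↔ v = m) :
    ∀ l : List V,
      l.Chain' (fun u v => u ≠ n ∧ v ≠ n ∧ (E u v ∨ (E u n ∧ v = m))) →
      (expand E n l).Chain' E := by
  intro l
  induction l with
  | nil => intro _; exact List.isChain_nil
  | cons x t ih =>
    cases t with
    | nil => intro _; exact List.isChain_singleton x
    | cons y rest =>
      intro hc
      rw [List.Chain', List.isChain_cons_cons] at hc
      obtain ⟨⟨hxn, hyn, hor⟩, hc⟩ := hc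
      obtain ⟨t', ht⟩ := expand_cons E n y rest
      have hch : (expand E n (y :: rest)).Chain' E := ih hc
      by_cases h : E x y
      · rw [show expand E n (x :: y :: rest) = x :: expand E n (y :: rest) by
          simp [expand, h]]
        rw [ht] at hch ⊢
        exact List.isChain_cons_cons.mpr ⟨h, hch⟩
      · rcases hor with h' | ⟨hxn', hym⟩
        · exact absurd h' h
        · rw [show expand E n (x :: y :: rest) = x :: n :: expand E n (y :: rest) by
            simp [expand, h]]
          rw [ht] at hch ⊢
          exact List.isChain_cons_cons.mpr ⟨hxn', List.isChain_cons_cons.mpr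
            ⟨(hsuc y).mpr hym, hch⟩⟩

lemma remove_chain' (E : V → V → Prop) (n m : V)
    (hsuc : ∀ v, E n v ↔ v = m) (hnm : n ≠ m) :
    ∀ l : List V, l.Chain' E →
      (l.filter (fun x => x ≠ n)).Chain'
        (fun u v => u ≠ n ∧ v ≠ n ∧ (E u v ∨ (E u n ∧ v = m))) := by
  intro l
  induction l with
  | nil => intro _; exact List.isChain_nil
  | cons x t ih =>
    cases t with
    | nil =>
      intro _
      by_cases hx : x = n <;> simp [hx, List.Chain']
    | cons y rest =>
      intro hc
      rw [List.Chain', List.isChain_cons_cons] at hc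
      obtain ⟨hxy, hc⟩ := hc
      by_cases hx : x = n
      · -- x = n, so it gets removed
        subst hx
        simpa using ih hc
      · by_cases hy : y = n
        · cases rest with
          | nil =>
            simp [hx, hy, List.Chain']
          | cons r rest' =>
            have hc0 := hc
            rw [List.isChain_cons_cons] at hc
            obtain ⟨hyr, hc'⟩ := hc
            have hrm : r = m := (hsuc r).mp (hy ▸ hyr)
            have hrn : r ≠ n := fun h => hnm (h ▸ hrm)
            have hthis := ih hc0
            have h1 : List.filter (fun x => decide (x ≠ n)) (y :: r :: rest')
                = r :: List.filter (fun x => decide (x ≠ n)) rest' := by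
              simp [hy, hrn]
            have h2 : List.filter (fun x => decide (x ≠ n)) (x :: y :: r :: rest')
                = x :: r :: List.filter (fun x => decide (x ≠ n)) rest' := by
              simp [hx, hy, hrn]
            rw [h1] at hthis
            rw [h2]
            exact List.isChain_cons_cons.mpr ⟨⟨hx, hrn, Or.inr ⟨hy ▸ hxy, hrm⟩⟩, hthis⟩
        · have := ih hc
          have hfil : (List.filter (fun x => !decide (x = n)) (y :: rest))
              = y :: List.filter (fun x => !decide (x = n)) rest := by simp [hy]
          simp only [decide_not] at this ⊢
          rw [hfil] at this
          rw [show List.filter (fun x => !decide (x = n)) (x :: y :: rest)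
              = x :: y :: List.filter (fun x => !decide (x = n)) rest by
            simp [hx, hy]]
          exact List.isChain_cons_cons.mpr ⟨⟨hx, hy, Or.inl hxy⟩, this⟩

lemma filter_head? (n a : V) (han : a ≠ n) (l : List V) (hl : l.head? = some a) :
    (l.filter (fun x => x ≠ n)).head? = some a := by
  cases l with
  | nil => simp at hl
  | cons x t =>
    simp only [List.head?_cons, Option.some_inj] at hl
    subst hl
    simp [han]

lemma filter_getLast? (n b : V) (hbn : b ≠ n) (l : List V) (hl : l.getLast? = some b) :
    (l.filter (fun x => x ≠ n)).getLast? = some b := by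
  rw [← List.head?_reverse] at hl ⊢
  rw [← List.filter_reverse]
  exact filter_head? n b hbn l.reverse hl

lemma filter_filter_ne (p : V → Bool) (n : V) (hpn : p n = false) :
    ∀ l : List V, (l.filter (fun x => x ≠ n)).filter p = l.filter p := by
  intro l
  induction l with
  | nil => rfl
  | cons x t ih =>
    by_cases hx : x = n
    · subst hx
      have h1 : List.filter (fun x_1 => decide (x_1 ≠ x)) (x :: t)
          = List.filter (fun x_1 => decide (x_1 ≠ x)) t := by simp
      rw [h1, ih, List.filter_cons, hpn]
      simp
    · have h1 : List.filter (fun x_1 => decide (x_1 ≠ n)) (x :: t)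
          = x :: List.filter (fun x_1 => decide (x_1 ≠ n)) t := by simp [hx]
      rw [h1, List.filter_cons, List.filter_cons, ih]

end Aux

/-- The T1 transformation (removing a non-colored node `n` with unique successor
`m` and redirecting each edge `(p,n)` to `(p,m)`) preserves the set of event traces
of entry-to-exit paths. -/
theorem stmt4 {V : Type*} [DecidableEq V] (E : V → V → Prop)
    (C : Set V) [DecidablePred (· ∈ C)] (top bot n m : V)
    (hnC : n ∉ C) (hntop : n ≠ top) (hnbot : n ≠ bot) (hnm : n ≠ m)
    (hsuc : ∀ v, E n v ↔ v = m) :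
    {t | ∃ l, IsWalkFromTo E top bot l ∧
        l.filter (fun v => decide (v ∈ C ∨ v = top ∨ v = bot)) = t} =
    {t | ∃ l, IsWalkFromTo
        (fun u v => u ≠ n ∧ v ≠ n ∧ (E u v ∨ (E u n ∧ v = m))) top bot l ∧
        l.filter (fun v => decide (v ∈ C ∨ v = top ∨ v = bot)) = t} := by
  have hpn : (fun v => decide (v ∈ C ∨ v = top ∨ v = bot)) n = false := by
    simp [hnC, hntop, hnbot]
  ext t
  simp only [Set.mem_setOf_eq]
  constructor
  · rintro ⟨l, ⟨hne, hhead, hlast, hchain⟩, rfl⟩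
    refine ⟨l.filter (fun x => x ≠ n), ⟨?_, ?_, ?_, ?_⟩, ?_⟩
    · intro h
      have := filter_head? n top (Ne.symm hntop) l hhead
      rw [h] at this; simp at this
    · exact filter_head? n top (Ne.symm hntop) l hhead
    · exact filter_getLast? n bot (Ne.symm hnbot) l hlast
    · exact remove_chain' E n m hsuc hnm l hchain
    · exact filter_filter_ne _ n hpn l
  · rintro ⟨l, ⟨hne, hhead, hlast, hchain⟩, rfl⟩
    refine ⟨expand E n l, ⟨?_, ?_, ?_, ?_⟩, ?_⟩
    · intro h
      have := expand_head? E n l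
      rw [h, hhead] at this; simp at this
    · rw [expand_head? E n l]; exact hhead
    · rw [expand_getLast? E n l]; exact hlast
    · exact expand_chain' E n m hsuc l hchain
    · exact expand_filter E n _ hpn l
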